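/- For a proper k-ideal I of a commutative semiring R, the following are equivalent: (1) I is k-semiprime; (2) I is the intersection of some nonempty family of k-prime ideals of R; (3) I is k-radical, i.e., R_k(I) = I. -/
import Mathlib


variable {R : Type*} [CommSemiring R]

/-- An ideal `I` of a commutative semiring is a *k-ideal* (subtractive ideal) if
`a ∈ I` and `a + b ∈ I` imply `b ∈ I`. -/
def IsKIdeal (I : Ideal R) : Prop :=
  ∀ a b : R, a ∈ I → a + b ∈ I → b ∈ I

/-- A *k-prime* ideal: a proper k-ideal `P` such that for all k-ideals `I`, `J`,
`I * J ≤ P` implies `I ≤ P` or `J ≤ P`. -/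
def IsKPrime (P : Ideal R) : Prop :=
  IsKIdeal P ∧ P ≠ ⊤ ∧
    ∀ I J : Ideal R, IsKIdeal I → IsKIdeal J → I * J ≤ P → I ≤ P ∨ J ≤ P

/-- A *k-semiprime* ideal: a proper k-ideal `Q` such that for every k-ideal `I`,
`I * I ≤ Q` implies `I ≤ Q`. -/
def IsKSemiprime (Q : Ideal R) : Prop :=
  IsKIdeal Q ∧ Q ≠ ⊤ ∧ ∀ I : Ideal R, IsKIdeal I → I * I ≤ Q → I ≤ Q

/-- The *k-radical* of an ideal: the intersection of all k-prime ideals containing it. -/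
def kRadical (I : Ideal R) : Ideal R :=
  sInf {P : Ideal R | IsKPrime P ∧ I ≤ P}

/-- The k-closure of an ideal. -/
def kcl (J : Ideal R) : Ideal R where
  carrier := {x | ∃ a ∈ J, x + a ∈ J}
  zero_mem' := ⟨0, J.zero_mem, by simpa using J.zero_mem⟩
  add_mem' := by
    rintro x y ⟨a, ha, hxa⟩ ⟨b, hb, hyb⟩
    refine ⟨a + b, J.add_mem ha hb, ?_⟩
    have h : (x + a) + (y + b) ∈ J := J.add_mem hxa hyb
    convert h using 1
    ring
  smul_mem' := by
    rintro c x ⟨a, ha, hxa⟩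
    refine ⟨c * a, J.mul_mem_left c ha, ?_⟩
    have h : c * (x + a) ∈ J := J.mul_mem_left c hxa
    simpa [mul_add] using h

theorem mem_kcl {J : Ideal R} {x : R} : x ∈ kcl J ↔ ∃ a ∈ J, x + a ∈ J := Iff.rfl

theorem le_kcl (J : Ideal R) : J ≤ kcl J := fun x hx =>
  ⟨0, J.zero_mem, by simpa using hx⟩

theorem isKIdeal_kcl (J : Ideal R) : IsKIdeal (kcl J) := by
  rintro a b ⟨u, hu, hau⟩ ⟨v, hv, habv⟩
  refine ⟨a + u + v, J.add_mem hau hv, ?_⟩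
  have h : (a + b + v) + u ∈ J := J.add_mem habv hu
  convert h using 1
  ring

theorem kcl_le {J P : Ideal R} (hP : IsKIdeal P) (h : J ≤ P) : kcl J ≤ P := by
  rintro x ⟨a, ha, hxa⟩
  exact hP a x (h ha) (by rw [add_comm]; exact h hxa)

theorem kcl_mono {J K : Ideal R} (h : J ≤ K) : kcl J ≤ kcl K :=
  kcl_le (isKIdeal_kcl K) (h.trans (le_kcl K))

theorem kcl_eq_self {J : Ideal R} (h : IsKIdeal J) : kcl J = J :=
  le_antisymm (kcl_le h le_rfl) (le_kcl J)

theorem kcl_mul_le (A B : Ideal R) : kcl A * B ≤ kcl (A * B) := by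
  rw [Ideal.mul_le]
  rintro x ⟨a, ha, hxa⟩ b hb
  refine ⟨a * b, Ideal.mul_mem_mul ha hb, ?_⟩
  have h : (x + a) * b ∈ A * B := Ideal.mul_mem_mul hxa hb
  simpa [add_mul] using h

theorem kcl_mul_kcl_le (A B : Ideal R) : kcl A * kcl B ≤ kcl (A * B) := by
  calc kcl A * kcl B ≤ kcl (A * kcl B) := kcl_mul_le A (kcl B)
    _ = kcl (kcl B * A) := by rw [mul_comm]
    _ ≤ kcl (kcl (B * A)) := kcl_mono (kcl_mul_le B A)
    _ = kcl (B * A) := kcl_eq_self (isKIdeal_kcl _)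
    _ = kcl (A * B) := by rw [mul_comm]

/-- Key lemma: for a k-semiprime ideal `I` and `a ∉ I`, there is a k-prime ideal
containing `I` and missing `a`. -/
theorem exists_kPrime_not_mem {I : Ideal R} (hsp : IsKSemiprime I) {a : R} (ha : a ∉ I) :
    ∃ P : Ideal R, IsKPrime P ∧ I ≤ P ∧ a ∉ P := by
  obtain ⟨hkI, hIt, hsemi⟩ := hsp
  -- step: from x ∉ I produce y ∈ kcl(span{x})² with y ∉ I
  have step : ∀ x : R, x ∉ I → ∃ y : R,
      y ∈ kcl (Ideal.span {x}) * kcl (Ideal.span {x}) ∧ y ∉ I := by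
    intro x hx
    by_contra h
    push_neg at h
    have hsq : kcl (Ideal.span {x}) * kcl (Ideal.span {x}) ≤ I := fun y hy => h y hy
    have := hsemi _ (isKIdeal_kcl _) hsq
    exact hx (this (le_kcl _ (Ideal.subset_span rfl)))
  -- the sequence
  let f : {x : R // x ∉ I} → {x : R // x ∉ I} := fun x =>
    ⟨(step x.1 x.2).choose, (step x.1 x.2).choose_spec.2⟩
  have hf : ∀ x : {x : R // x ∉ I},
      (f x).1 ∈ kcl (Ideal.span {x.1}) * kcl (Ideal.span {x.1}) := fun x =>
    (step x.1 x.2).choose_spec.1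
  let s : ℕ → {x : R // x ∉ I} := fun n => f^[n] ⟨a, ha⟩
  have hs_succ : ∀ n, s (n + 1) = f (s n) := fun n => Function.iterate_succ_apply' f n _
  have hsq : ∀ n, (s (n + 1)).1 ∈ kcl (Ideal.span {(s n).1}) * kcl (Ideal.span {(s n).1}) := by
    intro n; rw [hs_succ]; exact hf (s n)
  -- monotone membership
  have hmono : ∀ m n, m ≤ n → (s n).1 ∈ kcl (Ideal.span {(s m).1}) := by
    intro m n h
    induction n with
    | zero =>
      obtain rfl : m = 0 := Nat.le_zero.mp h
      exact le_kcl _ (Ideal.subset_span rfl)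
    | succ n ih =>
      rcases Nat.lt_or_ge m (n + 1) with hlt | hge
      · have hn := ih (Nat.lt_succ_iff.mp hlt)
        have hspan : Ideal.span {(s n).1} ≤ kcl (Ideal.span {(s m).1}) := by
          rw [Ideal.span_le]; simpa using hn
        have h1 : kcl (Ideal.span {(s n).1}) ≤ kcl (Ideal.span {(s m).1}) :=
          kcl_le (isKIdeal_kcl _) hspan
        have := hsq n
        have hmul : kcl (Ideal.span {(s n).1}) * kcl (Ideal.span {(s n).1}) ≤
            kcl (Ideal.span {(s m).1}) :=
          (Ideal.mul_le_left).trans h1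
        exact hmul this
      · obtain rfl : m = n + 1 := le_antisymm h hge
        exact le_kcl _ (Ideal.subset_span rfl)
  -- Zorn
  set S : Set (Ideal R) := {P | IsKIdeal P ∧ I ≤ P ∧ ∀ n, (s n).1 ∉ P} with hS
  have hIS : I ∈ S := ⟨hkI, le_rfl, fun n => (s n).2⟩
  obtain ⟨P, hIP, hPS, hPmax⟩ := zorn_le_nonempty₀ S (by
    intro c hcS hchain y hyc
    refine ⟨sSup c, ⟨?_, ?_, ?_⟩, fun z hz => le_sSup hz⟩
    · intro p q hp hpq
      have hdir : DirectedOn (· ≤ ·) c := hchain.directedOn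
      obtain ⟨A, hA, hpA⟩ := (Submodule.mem_sSup_of_directed ⟨y, hyc⟩ hdir).mp hp
      obtain ⟨B, hB, hpqB⟩ := (Submodule.mem_sSup_of_directed ⟨y, hyc⟩ hdir).mp hpq
      obtain ⟨C, hC, hAC, hBC⟩ := hdir A hA B hB
      exact (Submodule.mem_sSup_of_directed ⟨y, hyc⟩ hdir).mpr
        ⟨C, hC, (hcS hC).1 p q (hAC hpA) (hBC hpqB)⟩
    · exact ((hcS hyc).2.1).trans (le_sSup hyc)
    · intro n hn
      obtain ⟨A, hA, hmem⟩ :=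
        (Submodule.mem_sSup_of_directed ⟨y, hyc⟩ hchain.directedOn).mp hn
      exact (hcS hA).2.2 n hmem) I hIS
  obtain ⟨hkP, hIleP, hPavoid⟩ := hPS
  have ha0 : a ∉ P := by
    have := hPavoid 0
    simpa [s] using this
  refine ⟨P, ⟨hkP, fun ht => ha0 (ht ▸ Submodule.mem_top), ?_⟩, hIleP, ha0⟩
  intro J K hkJ hkK hJK
  by_contra hcon
  push_neg at hcon
  obtain ⟨hJP, hKP⟩ := hcon
  -- kcl (P + J) meets the sequence
  have meets : ∀ L : Ideal R, ¬ L ≤ P → ∃ m, (s m).1 ∈ kcl (P + L) := by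
    intro L hL
    by_contra h
    push_neg at h
    have hmem : kcl (P + L) ∈ S := ⟨isKIdeal_kcl _, hIleP.trans
      ((le_sup_left : P ≤ P + L).trans (le_kcl _)), h⟩
    have hle : kcl (P + L) ≤ P := hPmax hmem
      ((le_sup_left : P ≤ P + L).trans (le_kcl _))
    exact hL (((le_sup_right : L ≤ P + L).trans (le_kcl _)).trans hle)
  obtain ⟨m, hm⟩ := meets J hJP
  obtain ⟨n, hn⟩ := meets K hKP
  set t := max m n
  have htJ : (s t).1 ∈ kcl (P + J) := by
    have hspan : Ideal.span {(s m).1} ≤ kcl (P + J) := by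
      rw [Ideal.span_le]; simpa using hm
    exact kcl_le (isKIdeal_kcl _) hspan (hmono m t (le_max_left m n))
  have htK : (s t).1 ∈ kcl (P + K) := by
    have hspan : Ideal.span {(s n).1} ≤ kcl (P + K) := by
      rw [Ideal.span_le]; simpa using hn
    exact kcl_le (isKIdeal_kcl _) hspan (hmono n t (le_max_right m n))
  -- (P+J)(P+K) ≤ P
  have hprod : (P + J) * (P + K) ≤ P := by
    rw [Ideal.mul_le]
    intro r hr s' hs'
    obtain ⟨p, hp, j, hj, rfl⟩ := Submodule.mem_sup.mp hr
    obtain ⟨q, hq, k, hk, rfl⟩ := Submodule.mem_sup.mp hs'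
    have h1 : (p + j) * q ∈ P := P.mul_mem_left _ hq
    have h2 : p * k ∈ P := P.mul_mem_right _ hp
    have h3 : j * k ∈ P := hJK (Ideal.mul_mem_mul hj hk)
    have : (p + j) * q + (p * k + j * k) ∈ P := P.add_mem h1 (P.add_mem h2 h3)
    convert this using 1
    ring
  have hfinal : (s (t + 1)).1 ∈ P := by
    have h1 : (s (t + 1)).1 ∈ kcl (Ideal.span {(s t).1}) * kcl (Ideal.span {(s t).1}) := hsq t
    have h2 : kcl (Ideal.span {(s t).1}) ≤ kcl (P + J) := by
      refine kcl_le (isKIdeal_kcl _) ?_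
      rw [Ideal.span_le]; simpa using htJ
    have h3 : kcl (Ideal.span {(s t).1}) ≤ kcl (P + K) := by
      refine kcl_le (isKIdeal_kcl _) ?_
      rw [Ideal.span_le]; simpa using htK
    have h4 : kcl (Ideal.span {(s t).1}) * kcl (Ideal.span {(s t).1}) ≤
        kcl ((P + J) * (P + K)) :=
      (Ideal.mul_mono h2 h3).trans (kcl_mul_kcl_le _ _)
    have h5 : kcl ((P + J) * (P + K)) ≤ P := kcl_le hkP hprod
    exact h5 (h4 h1)
  exact hPavoid (t + 1) hfinal

theorem kRadical_eq_of_kSemiprime {I : Ideal R} (hsp : IsKSemiprime I) : kRadical I = I := by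
  refine le_antisymm ?_ (le_sInf fun P hP => hP.2)
  intro x hx
  by_contra hxI
  obtain ⟨P, hP, hIP, hxP⟩ := exists_kPrime_not_mem hsp hxI
  exact hxP (Submodule.mem_sInf.mp hx P ⟨hP, hIP⟩)

set_option maxHeartbeats 1000000 in
/-- For a proper k-ideal `I`, the following are equivalent: `I` is k-semiprime;
`I` is an intersection of a nonempty family of k-prime ideals; `I` is k-radical. -/
theorem kSemiprime_tfae (I : Ideal R) (hI : IsKIdeal I) (hproper : I ≠ ⊤) :
    (IsKSemiprime I ↔
        ∃ F : Set (Ideal R), F.Nonempty ∧ (∀ P ∈ F, IsKPrime P) ∧ I = sInf F) ∧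
      ((∃ F : Set (Ideal R), F.Nonempty ∧ (∀ P ∈ F, IsKPrime P) ∧ I = sInf F) ↔
        kRadical I = I) := by
  have h12 : IsKSemiprime I →
      ∃ F : Set (Ideal R), F.Nonempty ∧ (∀ P ∈ F, IsKPrime P) ∧ I = sInf F := by
    intro hsp
    refine ⟨{P : Ideal R | IsKPrime P ∧ I ≤ P}, ?_, fun P hP => hP.1,
      (kRadical_eq_of_kSemiprime hsp).symm⟩
    by_contra hne
    rw [Set.not_nonempty_iff_eq_empty] at hne
    have : kRadical I = ⊤ := by rw [kRadical, hne, sInf_empty]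
    exact hproper (by rw [← kRadical_eq_of_kSemiprime hsp, this])
  have h21 : (∃ F : Set (Ideal R), F.Nonempty ∧ (∀ P ∈ F, IsKPrime P) ∧ I = sInf F) →
      IsKSemiprime I := by
    rintro ⟨F, _, hF, rfl⟩
    refine ⟨hI, hproper, ?_⟩
    intro J hJ hJJ
    refine le_sInf fun P hP => ?_
    have := (hF P hP).2.2 J J hJ hJ (hJJ.trans (sInf_le hP))
    tauto
  have h23 : (∃ F : Set (Ideal R), F.Nonempty ∧ (∀ P ∈ F, IsKPrime P) ∧ I = sInf F) →
      kRadical I = I := by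
    rintro ⟨F, _, hF, hIF⟩
    refine le_antisymm ?_ (le_sInf fun P hP => hP.2)
    calc kRadical I ≤ sInf F := le_sInf fun P hP =>
          sInf_le ⟨hF P hP, hIF ▸ sInf_le hP⟩
      _ = I := hIF.symm
  have h32 : kRadical I = I →
      ∃ F : Set (Ideal R), F.Nonempty ∧ (∀ P ∈ F, IsKPrime P) ∧ I = sInf F := by
    intro hrad
    refine ⟨{P : Ideal R | IsKPrime P ∧ I ≤ P}, ?_, fun P hP => hP.1, hrad.symm⟩
    by_contra hne
    rw [Set.not_nonempty_iff_eq_empty] at hne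
    have : kRadical I = ⊤ := by rw [kRadical, hne, sInf_empty]
    exact hproper (by rw [← hrad, this])
  exact ⟨⟨h12, h21⟩, ⟨h23, h32⟩⟩
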